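/- Fixed-design setting: let y : Ω → ℝ^n be a square-integrable random vector with covariance matrix Σ (Σ_{ij} = Cov(y_i, y_j)), let H be a deterministic n×n real matrix with zero diagonal (so the CV predictor is ŷ_cv = H y and (Hy)_k does not involve y_k), let y_tr : Ω → ℝ^{n−1} be a square-integrable random vector, y_te : Ω → ℝ a square-integrable random variable, and h_te ∈ ℝ^{n−1} a deterministic row vector (the test hat vector, so ŷ_te = h_te · y_tr). Assume for every k ∈ {1,…,n}: E y_k = E y_te, Var(y_k) = Var(y_te), E[(Hy)_k] = E[h_te · y_tr], and Var((Hy)_k) = Var(h_te · y_tr). Then w_cv := E[(y_te − h_te · y_tr)²] − (1/n)E[‖y − H y‖²] = (2/n)[tr(H Σ) − n (h_te · c)], where c ∈ ℝ^{n−1} is the cross-covariance vector c_j = Cov((y_tr)_j, y_te). (Paper's Theorem 2 for linear predictors.) -/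

import Mathlib

open MeasureTheory

/-- Variance `E[(U - E U)^2]` of a real random variable. -/
noncomputable def eVar {Ω : Type*} [MeasurableSpace Ω] (μ : Measure Ω) (U : Ω → ℝ) : ℝ :=
  ∫ ω, (U ω - ∫ ω', U ω' ∂μ) ^ 2 ∂μ

/-- Covariance `E[(U - E U)(V - E V)]` of two real random variables. -/
noncomputable def eCov {Ω : Type*} [MeasurableSpace Ω] (μ : Measure Ω) (U V : Ω → ℝ) : ℝ :=
  ∫ ω, (U ω - ∫ ω', U ω' ∂μ) * (V ω - ∫ ω', V ω' ∂μ) ∂μ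

section Aux

variable {Ω : Type*} [MeasurableSpace Ω] {μ : Measure Ω} [IsProbabilityMeasure μ]

lemma aux_integrable_mul {U V : Ω → ℝ} (hU : MemLp U 2 μ) (hV : MemLp V 2 μ) :
    Integrable (fun ω => U ω * V ω) μ := by
  have h1 : Integrable (fun ω => (U ω + V ω) ^ 2) μ := (hU.add hV).integrable_sq
  have h2 := hU.integrable_sq
  have h3 := hV.integrable_sq
  have h : Integrable (fun ω => (((U ω + V ω) ^ 2 - U ω ^ 2) - V ω ^ 2) * (1/2)) μ :=
    ((h1.sub h2).sub h3).mul_const _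
  refine h.congr (Filter.Eventually.of_forall fun ω => ?_)
  ring

lemma eCov_eq {U V : Ω → ℝ} (hU : MemLp U 2 μ) (hV : MemLp V 2 μ) :
    eCov μ U V = (∫ ω, U ω * V ω ∂μ) - (∫ ω, U ω ∂μ) * (∫ ω, V ω ∂μ) := by
  have hUi := hU.integrable one_le_two
  have hVi := hV.integrable one_le_two
  have hUV := aux_integrable_mul hU hV
  unfold eCov
  set a := ∫ ω, U ω ∂μ with ha
  set b := ∫ ω, V ω ∂μ with hb
  have h : ∀ ω, (U ω - a) * (V ω - b) = (U ω * V ω - V ω * a) - (U ω * b - a * b) := by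
    intro ω; ring
  simp_rw [h]
  have i1 : Integrable (fun ω => U ω * V ω - V ω * a) μ := hUV.sub (hVi.mul_const a)
  have i2 : Integrable (fun ω => U ω * b - a * b) μ :=
    (hUi.mul_const b).sub (integrable_const _)
  rw [integral_sub i1 i2, integral_sub hUV (hVi.mul_const a),
    integral_sub (hUi.mul_const b) (integrable_const _),
    integral_mul_const, integral_mul_const, integral_const]
  simp [← ha, ← hb]
  ring

lemma eVar_eq {U : Ω → ℝ} (hU : MemLp U 2 μ) :
    eVar μ U = (∫ ω, U ω * U ω ∂μ) - (∫ ω, U ω ∂μ) * (∫ ω, U ω ∂μ) := by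
  have := eCov_eq hU hU
  unfold eCov at this
  unfold eVar
  simp_rw [pow_two]
  exact this

lemma eCov_comm {U V : Ω → ℝ} : eCov μ U V = eCov μ V U := by
  unfold eCov; simp_rw [mul_comm]

lemma sub_sq_integral {U V : Ω → ℝ} (hU : MemLp U 2 μ) (hV : MemLp V 2 μ) :
    ∫ ω, (U ω - V ω) ^ 2 ∂μ
      = eVar μ U + eVar μ V - 2 * eCov μ U V
        + ((∫ ω, U ω ∂μ) - (∫ ω, V ω ∂μ)) ^ 2 := by
  have hUU := aux_integrable_mul hU hU
  have hVV := aux_integrable_mul hV hV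
  have hUV := aux_integrable_mul hU hV
  have h : ∀ ω, (U ω - V ω) ^ 2 = (U ω * U ω - U ω * V ω * 2) + V ω * V ω := by
    intro ω; ring
  simp_rw [h]
  have i1 : Integrable (fun ω => U ω * U ω - U ω * V ω * 2) μ := hUU.sub (hUV.mul_const 2)
  rw [integral_add i1 hVV, integral_sub hUU (hUV.mul_const 2), integral_mul_const,
    eVar_eq hU, eVar_eq hV, eCov_eq hU hV]
  ring

lemma eCov_sum_right {ι : Type*} [Fintype ι] {U : Ω → ℝ} (hU : MemLp U 2 μ)
    {V : ι → Ω → ℝ} (hV : ∀ j, MemLp (V j) 2 μ) (a : ι → ℝ) :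
    eCov μ U (fun ω => ∑ j, a j * V j ω) = ∑ j, a j * eCov μ U (V j) := by
  have hS : MemLp (fun ω => ∑ j, a j * V j ω) 2 μ := by
    have := memLp_finset_sum' (μ := μ) Finset.univ (f := fun j ω => a j * V j ω)
      (fun j _ => (hV j).const_mul (a j))
    simpa [Finset.sum_fn] using this
  rw [eCov_eq hU hS]
  have h1 : (∫ ω, U ω * ∑ j, a j * V j ω ∂μ) = ∑ j, a j * ∫ ω, U ω * V j ω ∂μ := by
    have : ∀ ω, U ω * ∑ j, a j * V j ω = ∑ j, a j * (U ω * V j ω) := by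
      intro ω; rw [Finset.mul_sum]; exact Finset.sum_congr rfl fun j _ => by ring
    simp_rw [this]
    rw [integral_finset_sum _ fun j _ => (aux_integrable_mul hU (hV j)).const_mul (a j)]
    exact Finset.sum_congr rfl fun j _ => integral_const_mul _ _
  have h2 : (∫ ω, ∑ j, a j * V j ω ∂μ) = ∑ j, a j * ∫ ω, V j ω ∂μ := by
    rw [integral_finset_sum _ fun j _ => ((hV j).integrable one_le_two).const_mul (a j)]
    exact Finset.sum_congr rfl fun j _ => integral_const_mul _ _
  rw [h1, h2, Finset.mul_sum, ← Finset.sum_sub_distrib]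
  exact Finset.sum_congr rfl fun j _ => by rw [eCov_eq hU (hV j)]; ring

end Aux

/-- **Paper's Theorem 2** (fixed-design, linear predictors). With a zero-diagonal CV hat
matrix `H` (so `ŷ_cv = H y`), a test hat vector `h_te` (so `ŷ_te = h_te · y_tr`), and
matching means and variances of held-out responses/predictors and test response/predictor,
the CV bias equals `(2/n) [tr(H Σ) − n h_te · Cov(y_tr, y_te)]`. -/
theorem cv_bias_linear_predictor
    {Ω : Type*} [MeasurableSpace Ω] (μ : Measure Ω) [IsProbabilityMeasure μ]
    (n : ℕ) (hn : 0 < n)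
    (y : Fin n → Ω → ℝ) (hy : ∀ k, MemLp (y k) 2 μ)
    (H : Matrix (Fin n) (Fin n) ℝ) (hHdiag : ∀ k, H k k = 0)
    (ytr : Fin (n - 1) → Ω → ℝ) (hytr : ∀ j, MemLp (ytr j) 2 μ)
    (yte : Ω → ℝ) (hyte : MemLp yte 2 μ)
    (hte : Fin (n - 1) → ℝ)
    (Sig : Matrix (Fin n) (Fin n) ℝ)
    (hSig : ∀ i j, Sig i j = eCov μ (y i) (y j))
    (hmean : ∀ k, ∫ ω, y k ω ∂μ = ∫ ω, yte ω ∂μ)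
    (hvar : ∀ k, eVar μ (y k) = eVar μ yte)
    (hmeanH : ∀ k, ∫ ω, (∑ j, H k j * y j ω) ∂μ = ∫ ω, (∑ j, hte j * ytr j ω) ∂μ)
    (hvarH : ∀ k, eVar μ (fun ω => ∑ j, H k j * y j ω)
        = eVar μ (fun ω => ∑ j, hte j * ytr j ω)) :
    (∫ ω, (yte ω - ∑ j, hte j * ytr j ω) ^ 2 ∂μ)
        - (1 / (n : ℝ)) * ∫ ω, ∑ k, (y k ω - ∑ j, H k j * y j ω) ^ 2 ∂μ
      = (2 / (n : ℝ)) * (Matrix.trace (H * Sig)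
          - (n : ℝ) * ∑ j, hte j * eCov μ (ytr j) yte) := by
  have hP : ∀ k, MemLp (fun ω => ∑ j, H k j * y j ω) 2 μ := by
    intro k
    have := memLp_finset_sum' (μ := μ) Finset.univ (f := fun j ω => H k j * y j ω)
      (fun j _ => (hy j).const_mul (H k j))
    simpa [Finset.sum_fn] using this
  have hPte : MemLp (fun ω => ∑ j, hte j * ytr j ω) 2 μ := by
    have := memLp_finset_sum' (μ := μ) Finset.univ (f := fun j ω => hte j * ytr j ω)
      (fun j _ => (hytr j).const_mul (hte j))
    simpa [Finset.sum_fn] using this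
  -- per-k integrand expansion
  have hsum : (∫ ω, ∑ k, (y k ω - ∑ j, H k j * y j ω) ^ 2 ∂μ)
      = ∑ k, ∫ ω, (y k ω - ∑ j, H k j * y j ω) ^ 2 ∂μ := by
    refine integral_finset_sum _ fun k _ => ?_
    have := ((hy k).sub (hP k)).integrable_sq
    exact this
  have hT : (∫ ω, (yte ω - ∑ j, hte j * ytr j ω) ^ 2 ∂μ)
      = eVar μ yte + eVar μ (fun ω => ∑ j, hte j * ytr j ω)
        - 2 * eCov μ yte (fun ω => ∑ j, hte j * ytr j ω)
        + ((∫ ω, yte ω ∂μ) - ∫ ω, (∑ j, hte j * ytr j ω) ∂μ) ^ 2 :=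
    sub_sq_integral hyte hPte
  have hK : ∀ k, (∫ ω, (y k ω - ∑ j, H k j * y j ω) ^ 2 ∂μ)
      = eVar μ yte + eVar μ (fun ω => ∑ j, hte j * ytr j ω)
        - 2 * eCov μ (y k) (fun ω => ∑ j, H k j * y j ω)
        + ((∫ ω, yte ω ∂μ) - ∫ ω, (∑ j, hte j * ytr j ω) ∂μ) ^ 2 := by
    intro k
    rw [sub_sq_integral (hy k) (hP k), hvar k, hvarH k, hmean k, hmeanH k]
  -- covariance expansions
  have hCk : ∀ k, eCov μ (y k) (fun ω => ∑ j, H k j * y j ω)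
      = ∑ j, H k j * eCov μ (y k) (y j) := fun k =>
    eCov_sum_right (hy k) hy _
  have hCte : eCov μ yte (fun ω => ∑ j, hte j * ytr j ω)
      = ∑ j, hte j * eCov μ (ytr j) yte := by
    rw [eCov_sum_right hyte hytr]
    exact Finset.sum_congr rfl fun j _ => by rw [eCov_comm]
  have htr : Matrix.trace (H * Sig) = ∑ k, ∑ j, H k j * eCov μ (y k) (y j) := by
    rw [Matrix.trace]
    refine Finset.sum_congr rfl fun k _ => ?_
    rw [Matrix.diag_apply, Matrix.mul_apply]
    refine Finset.sum_congr rfl fun j _ => ?_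
    rw [hSig j k, eCov_comm]
  have hnn : (n : ℝ) ≠ 0 := Nat.cast_ne_zero.mpr hn.ne'
  rw [hsum, hT]
  simp_rw [hK]
  rw [Finset.sum_add_distrib, Finset.sum_sub_distrib, Finset.sum_const, Finset.sum_const,
    Finset.card_univ, Fintype.card_fin, htr, hCte]
  simp_rw [hCk]
  field_simp
  ring_nf
  rw [← Finset.sum_mul]
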